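/- Let (X̂, d) be a compact metric space, Z ⊆ X̂ a closed subset, and M = X̂ \ Z. Suppose M admits a CW-complex structure all of whose cells have dimension at most n, and suppose that for every δ > 0 there is a homotopy H : X̂ × [0,1] → X̂ with H(x,0) = x for all x ∈ X̂, with H(x,t) ∈ M for all x ∈ X̂ and all t > 0, and with d(H(x,t), x) < δ for all x ∈ X̂ and t ∈ [0,1] (i.e., X̂ can be instantly homotoped off of Z by arbitrarily short homotopies). Then M, equipped with the restriction of the metric d, is controlled n-dominated: for every ε > 0 there exist a finite CW complex K all of whose cells have dimension at most n, continuous maps p : K → M and g : M → K, and a homotopy h : M × [0,1] → M with h(x,0) = p(g(x)), h(x,1) = x, and d(h(x,t), x) < ε for all x ∈ M and t ∈ [0,1]. -/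

import Mathlib

/-!
Statement 0: A space `M = X̂ \ Z` (with `X̂` compact metric, `Z` closed) that admits a
CW structure with cells of dimension at most `n`, and such that `X̂` can be instantly
homotoped off of `Z` by arbitrarily short homotopies, is controlled `n`-dominated.

Finite CW complexes of dimension at most `n` are expressed using Mathlib's `CWComplex`
(an expanding sequence of skeleta, where `sk (k+1)` is obtained from `sk k` by attaching
`k`-cells): the cell-index types of `attachCells k` must be empty for `k > n` (dimension
at most `n`) and finite for all `k` (finitely many cells).
-/

open unitInterval

open CategoryTheory

namespace RelativeCWComplex

/-- The `n`-dimensional sphere (old Mathlib definition, indexed by `ℤ`). -/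
noncomputable def sphere (n : ℤ) : TopCat.{0} :=
  TopCat.of <| ULift <| Metric.sphere (0 : EuclideanSpace ℝ <| Fin <| (n + 1).toNat) 1

/-- The `n`-dimensional closed disk (old Mathlib definition, indexed by `ℤ`). -/
noncomputable def disk (n : ℤ) : TopCat.{0} :=
  TopCat.of <| ULift <| Metric.closedBall (0 : EuclideanSpace ℝ <| Fin <| n.toNat) 1

/-- The inclusion map from the `n`-sphere to the `(n + 1)`-disk. -/
def sphereInclusion (n : ℤ) : sphere n ⟶ disk (n + 1) :=
  TopCat.ofHom
    { toFun := fun x ↦ ⟨⟨x.down.1, Metric.sphere_subset_closedBall x.down.2⟩⟩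
      continuous_toFun := by
        fun_prop }

/-- The inclusion map from the disjoint union of `n`-spheres to the disjoint union of
`(n + 1)`-disks, where both of the disjoint unions are indexed by `cells`. -/
noncomputable def sigmaSphereInclusion (n : ℤ) (cells : Type) :
    (∐ fun (_ : cells) ↦ sphere n) ⟶ (∐ fun (_ : cells) ↦ disk (n + 1)) :=
  Limits.Sigma.map fun _ ↦ sphereInclusion n

/-- Given an attaching map for each `n`-sphere, the attaching map for the disjoint
union of the `n`-spheres. -/
noncomputable def sigmaAttachMap (X : TopCat) (n : ℤ) (cells : Type)
    (attachMaps : cells → (sphere n ⟶ X)) : (∐ fun (_ : cells) ↦ sphere n) ⟶ X :=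
  Limits.Sigma.desc attachMaps

/-- A type witnessing that `X'` is obtained from `X` by attaching `(n + 1)`-disks -/
structure AttachCells (X X' : TopCat) (n : ℤ) where
  /-- The index type over `(n + 1)`-disks -/
  cells : Type
  /-- For each `(n + 1)`-disk, an attaching map from its boundary to `X`. -/
  attachMaps : cells → (sphere n ⟶ X)
  /-- `X'` is the pushout of `∐ Sⁿ ⟶ X` and `∐ Sⁿ ⟶ ∐ Dⁿ⁺¹`. -/
  iso_pushout : X' ≅ Limits.pushout (sigmaSphereInclusion n cells)
    (sigmaAttachMap X n cells attachMaps)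

end RelativeCWComplex

/-- A relative CW-complex (old Mathlib definition). -/
structure RelativeCWComplex where
  /-- The skeletons. -/
  sk : ℕ → TopCat
  /-- Each `sk (n + 1)` is obtained from `sk n` by attaching `n`-disks. -/
  attachCells (n : ℕ) : RelativeCWComplex.AttachCells (sk n) (sk (n + 1)) (n - 1)

/-- A CW-complex is a relative CW-complex whose `sk 0` is empty (old Mathlib definition). -/
structure CWComplex extends RelativeCWComplex where
  /-- `sk 0` is empty. -/
  isEmpty_sk_zero : IsEmpty (sk 0)

namespace RelativeCWComplex

/-- The inclusion map from `X` to `X'`. -/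
noncomputable def AttachCells.inclusion (X X' : TopCat) (n : ℤ) (att : AttachCells X X' n) :
    X ⟶ X' :=
  Limits.pushout.inr _ _ ≫ att.iso_pushout.inv

/-- The inclusion map from `sk n` to `sk (n+1)`. -/
noncomputable def skInclusion (X : RelativeCWComplex) (n : ℕ) : X.sk n ⟶ X.sk (n + 1) :=
  AttachCells.inclusion (X.sk n) (X.sk (n + 1)) (n - 1) (X.attachCells n)

/-- The topology on a relative CW-complex. -/
noncomputable def toTopCat (X : RelativeCWComplex) : TopCat :=
  Limits.colimit (Functor.ofSequence (skInclusion X))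

end RelativeCWComplex

open Topology

namespace CtrlDom

universe u v

variable {S D Y : Type u} [TopologicalSpace S] [TopologicalSpace D] [TopologicalSpace Y]
variable {E : Type u}

/-- The gluing relation for attaching cells `E × D` to `Y` along `g : S → D` (the boundary
inclusion) and attaching maps `A i : S → Y`. -/
def glueRel (g : C(S, D)) (A : E → C(S, Y)) : (Y ⊕ (Σ _ : E, D)) → (Y ⊕ (Σ _ : E, D)) → Prop
  | .inl y, .inl y' => y = y'
  | .inl y, .inr p => ∃ s, g s = p.2 ∧ A p.1 s = y
  | .inr p, .inl y => ∃ s, g s = p.2 ∧ A p.1 s = y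
  | .inr p, .inr p' => p = p' ∨ ∃ s s', g s = p.2 ∧ g s' = p'.2 ∧ A p.1 s = A p'.1 s'

variable {g : C(S, D)} {A : E → C(S, Y)}

theorem glueRel_inl_inl {y y' : Y} : glueRel g A (.inl y) (.inl y') ↔ y = y' := Iff.rfl
theorem glueRel_inl_inr {y : Y} {p : Σ _ : E, D} :
    glueRel g A (.inl y) (.inr p) ↔ ∃ s, g s = p.2 ∧ A p.1 s = y := Iff.rfl
theorem glueRel_inr_inl {y : Y} {p : Σ _ : E, D} :
    glueRel g A (.inr p) (.inl y) ↔ ∃ s, g s = p.2 ∧ A p.1 s = y := Iff.rfl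
theorem glueRel_inr_inr {p p' : Σ _ : E, D} :
    glueRel g A (.inr p) (.inr p') ↔
      p = p' ∨ ∃ s s', g s = p.2 ∧ g s' = p'.2 ∧ A p.1 s = A p'.1 s' := Iff.rfl

theorem glueRel_equivalence (g : C(S, D)) (hg : Function.Injective g) (A : E → C(S, Y)) :
    Equivalence (glueRel g A) := by
  constructor
  · rintro (y | p)
    · exact rfl
    · exact Or.inl rfl
  · rintro (y | p) (y' | p') h
    · exact (glueRel_inl_inl.mp h).symm
    · exact h
    · exact h
    · rcases glueRel_inr_inr.mp h with h | ⟨s, s', h1, h2, h3⟩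
      · exact Or.inl h.symm
      · exact Or.inr ⟨s', s, h2, h1, h3.symm⟩
  · rintro (y | p) (y' | p') (y'' | p'') h1 h2
    · exact (glueRel_inl_inl.mp h1).trans (glueRel_inl_inl.mp h2)
    · obtain rfl := glueRel_inl_inl.mp h1; exact h2
    · obtain ⟨s, hs1, hs2⟩ := glueRel_inl_inr.mp h1
      obtain ⟨t, ht1, ht2⟩ := glueRel_inr_inl.mp h2
      obtain rfl : s = t := hg (hs1.trans ht1.symm)
      exact glueRel_inl_inl.mpr (hs2.symm.trans ht2)
    · obtain ⟨s, hs1, hs2⟩ := glueRel_inl_inr.mp h1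
      rcases glueRel_inr_inr.mp h2 with rfl | ⟨t, t', ht1, ht2, ht3⟩
      · exact glueRel_inl_inr.mpr ⟨s, hs1, hs2⟩
      · obtain rfl : s = t := hg (hs1.trans ht1.symm)
        exact glueRel_inl_inr.mpr ⟨t', ht2, by rw [← ht3, hs2]⟩
    · obtain ⟨s, hs1, hs2⟩ := glueRel_inr_inl.mp h1
      obtain rfl := glueRel_inl_inl.mp h2
      exact glueRel_inr_inl.mpr ⟨s, hs1, hs2⟩
    · obtain ⟨s, hs1, hs2⟩ := glueRel_inr_inl.mp h1
      obtain ⟨t, ht1, ht2⟩ := glueRel_inl_inr.mp h2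
      exact glueRel_inr_inr.mpr (Or.inr ⟨s, t, hs1, ht1, hs2.trans ht2.symm⟩)
    · rcases glueRel_inr_inr.mp h1 with rfl | ⟨s, s', hs1, hs2, hs3⟩
      · exact h2
      · obtain ⟨t, ht1, ht2⟩ := glueRel_inr_inl.mp h2
        obtain rfl : s' = t := hg (hs2.trans ht1.symm)
        exact glueRel_inr_inl.mpr ⟨s, hs1, by rw [hs3, ht2]⟩
    · rcases glueRel_inr_inr.mp h1 with rfl | ⟨s, s', hs1, hs2, hs3⟩
      · exact h2
      · rcases glueRel_inr_inr.mp h2 with rfl | ⟨t, t', ht1, ht2, ht3⟩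
        · exact glueRel_inr_inr.mpr (Or.inr ⟨s, s', hs1, hs2, hs3⟩)
        · obtain rfl : s' = t := hg (hs2.trans ht1.symm)
          exact glueRel_inr_inr.mpr (Or.inr ⟨s, t', hs1, ht2, by rw [hs3, ht3]⟩)

/-- Setoid for the glueing. -/
def glueSetoid (g : C(S, D)) (hg : Function.Injective g) (A : E → C(S, Y)) :
    Setoid (Y ⊕ (Σ _ : E, D)) :=
  ⟨glueRel g A, glueRel_equivalence g hg A⟩

/-- The adjunction space obtained by gluing cells to `Y`. -/
def Glue (g : C(S, D)) (hg : Function.Injective g) (A : E → C(S, Y)) : Type u :=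
  Quotient (glueSetoid g hg A)

instance (g : C(S, D)) (hg : Function.Injective g) (A : E → C(S, Y)) :
    TopologicalSpace (Glue g hg A) :=
  instTopologicalSpaceQuotient

variable (g : C(S, D)) (hg : Function.Injective g) (A : E → C(S, Y))

/-- Inclusion of the base into the glued space. -/
def qY : C(Y, Glue g hg A) :=
  ⟨fun y => Quotient.mk _ (.inl y), continuous_quotient_mk'.comp continuous_inl⟩

/-- Characteristic map of the `i`-th cell. -/
def qD (i : E) : C(D, Glue g hg A) :=
  ⟨fun d => Quotient.mk _ (.inr ⟨i, d⟩),
    continuous_quotient_mk'.comp (continuous_inr.comp continuous_sigmaMk)⟩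

theorem glue_cases (z : Glue g hg A) : (∃ y, z = qY g hg A y) ∨ ∃ i d, z = qD g hg A i d := by
  induction z using Quotient.ind with
  | _ a =>
    rcases a with y | ⟨i, d⟩
    · exact Or.inl ⟨y, rfl⟩
    · exact Or.inr ⟨i, d, rfl⟩

theorem glue_jointly_surjective :
    ∀ z : Glue g hg A, z ∈ Set.range (qY g hg A) ∪ ⋃ i, Set.range (qD g hg A i) := by
  intro z
  rcases glue_cases g hg A z with ⟨y, rfl⟩ | ⟨i, d, rfl⟩
  · exact Or.inl ⟨y, rfl⟩
  · exact Or.inr (Set.mem_iUnion.mpr ⟨i, d, rfl⟩)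

theorem qY_injective : Function.Injective (qY g hg A) := by
  intro y y' h
  exact glueRel_inl_inl.mp (Quotient.eq''.mp h)

theorem qY_eq_qD_iff {y : Y} {i : E} {d : D} :
    qY g hg A y = qD g hg A i d ↔ ∃ s, g s = d ∧ A i s = y :=
  ⟨fun h => glueRel_inl_inr.mp (Quotient.eq''.mp h), fun h => Quotient.sound (glueRel_inl_inr.mpr h)⟩

theorem qD_eq_qY_iff {y : Y} {i : E} {d : D} :
    qD g hg A i d = qY g hg A y ↔ ∃ s, g s = d ∧ A i s = y :=
  ⟨fun h => glueRel_inr_inl.mp (Quotient.eq''.mp h), fun h => Quotient.sound (glueRel_inr_inl.mpr h)⟩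

theorem qD_eq_qD_iff {i j : E} {d d' : D} :
    qD g hg A i d = qD g hg A j d' ↔
      ((⟨i, d⟩ : Σ _ : E, D) = ⟨j, d'⟩) ∨ ∃ s s', g s = d ∧ g s' = d' ∧ A i s = A j s' :=
  ⟨fun h => glueRel_inr_inr.mp (Quotient.eq''.mp h), fun h => Quotient.sound (glueRel_inr_inr.mpr h)⟩

theorem isClosed_glue_iff {T : Set (Glue g hg A)} :
    IsClosed T ↔ IsClosed (qY g hg A ⁻¹' T) ∧ ∀ i, IsClosed (qD g hg A i ⁻¹' T) := by
  have hq : IsQuotientMap (Quotient.mk (glueSetoid g hg A)) := isQuotientMap_quotient_mk'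
  rw [← (show IsClosed (Quotient.mk _ ⁻¹' T) ↔ IsClosed T from hq.isClosed_preimage), isClosed_sum_iff, isClosed_sigma_iff]
  rfl

theorem isOpen_glue_iff {T : Set (Glue g hg A)} :
    IsOpen T ↔ IsOpen (qY g hg A ⁻¹' T) ∧ ∀ i, IsOpen (qD g hg A i ⁻¹' T) := by
  have hq : IsQuotientMap (Quotient.mk (glueSetoid g hg A)) := isQuotientMap_quotient_mk'
  rw [← (show IsOpen (Quotient.mk _ ⁻¹' T) ↔ IsOpen T from hq.isOpen_preimage), isOpen_sum_iff, isOpen_sigma_iff]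
  rfl

/-- Descend a pair of compatible maps to the glued space. -/
def glueDesc {W : Type v} [TopologicalSpace W] (u : C(Y, W)) (v : ∀ _ : E, C(D, W))
    (hc : ∀ i s, v i (g s) = u (A i s)) : C(Glue g hg A, W) := by
  refine ⟨Quotient.lift (Sum.elim u (fun p => v p.1 p.2)) ?_, ?_⟩
  · rintro (y | p) (y' | p') h
    · obtain rfl := glueRel_inl_inl.mp h; rfl
    · obtain ⟨s, hs1, hs2⟩ := glueRel_inl_inr.mp h
      simp only [Sum.elim_inl, Sum.elim_inr]
      rw [← hs1, hc, hs2]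
    · obtain ⟨s, hs1, hs2⟩ := glueRel_inr_inl.mp h
      simp only [Sum.elim_inl, Sum.elim_inr]
      rw [← hs1, hc, hs2]
    · rcases glueRel_inr_inr.mp h with rfl | ⟨s, s', hs1, hs2, hs3⟩
      · rfl
      · simp only [Sum.elim_inr]
        rw [← hs1, ← hs2, hc, hc, hs3]
  · exact Continuous.quotient_lift (Continuous.sumElim
      u.continuous (continuous_sigma fun i => (v i).continuous)) _

@[simp] theorem glueDesc_qY {W : Type v} [TopologicalSpace W] (u : C(Y, W)) (v : ∀ _ : E, C(D, W))
    (hc : ∀ i s, v i (g s) = u (A i s)) (y : Y) :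
    glueDesc g hg A u v hc (qY g hg A y) = u y := rfl

@[simp] theorem glueDesc_qD {W : Type v} [TopologicalSpace W] (u : C(Y, W)) (v : ∀ _ : E, C(D, W))
    (hc : ∀ i s, v i (g s) = u (A i s)) (i : E) (d : D) :
    glueDesc g hg A u v hc (qD g hg A i d) = v i d := rfl

theorem qY_isClosedEmbedding (hgc : IsClosedMap g) :
    IsClosedEmbedding (qY g hg A) := by
  apply IsClosedEmbedding.of_continuous_injective_isClosedMap (qY g hg A).continuous
    (qY_injective g hg A)
  intro T hT
  rw [isClosed_glue_iff]
  constructor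
  · rwa [Set.preimage_image_eq _ (qY_injective g hg A)]
  · intro i
    have : qD g hg A i ⁻¹' (qY g hg A '' T) = g '' ((A i) ⁻¹' T) := by
      ext d
      simp only [Set.mem_preimage, Set.mem_image]
      constructor
      · rintro ⟨y, hy, hyd⟩
        obtain ⟨s, hs1, hs2⟩ := qD_eq_qY_iff g hg A |>.mp hyd.symm
        exact ⟨s, show (A i) s ∈ T by rw [hs2]; exact hy, hs1⟩
      · rintro ⟨s, hs, rfl⟩
        exact ⟨A i s, hs, ((qD_eq_qY_iff g hg A).mpr ⟨s, rfl, rfl⟩).symm⟩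
    rw [this]
    exact hgc _ (hT.preimage (A i).continuous)

theorem glue_compactSpace [CompactSpace Y] [CompactSpace D] [Finite E] :
    CompactSpace (Glue g hg A) := by
  constructor
  have : Set.univ = Quotient.mk (glueSetoid g hg A) '' Set.univ := by
    ext z
    simp only [Set.mem_univ, true_iff, Set.mem_image]
    exact ⟨z.out, trivial, Quotient.out_eq z⟩
  rw [show (Set.univ : Set (Glue g hg A)) = Quotient.mk (glueSetoid g hg A) '' Set.univ from this]
  exact (isCompact_univ).image continuous_quotient_mk'

theorem qY_bijective_of_isEmpty [IsEmpty E] : Function.Bijective (qY g hg A) := by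
  refine ⟨qY_injective g hg A, fun z => ?_⟩
  rcases glue_cases g hg A z with ⟨y, rfl⟩ | ⟨i, _, _⟩
  · exact ⟨y, rfl⟩
  · exact (IsEmpty.false i).elim

end CtrlDom


namespace CtrlDom

universe u

open CategoryTheory Limits Topology TopCat

section Categorical

variable (Sc Dc Y : TopCat.{u}) {E : Type u} (gT : Sc ⟶ Dc) (hg : Function.Injective gT)
  (Att : E → (Sc ⟶ Y))

/-- The glue space as an object of `TopCat`. -/
noncomputable def glueObj : TopCat.{u} :=
  TopCat.of (Glue gT.hom hg (fun i => (Att i).hom))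

/-- Base inclusion, as a morphism of `TopCat`. -/
noncomputable def glueInl : Y ⟶ glueObj Sc Dc Y gT hg Att :=
  TopCat.ofHom (qY gT.hom hg (fun i => (Att i).hom) : C(Y, glueObj Sc Dc Y gT hg Att))

/-- Characteristic maps, as morphisms of `TopCat`. -/
noncomputable def glueChar (i : E) : Dc ⟶ glueObj Sc Dc Y gT hg Att :=
  TopCat.ofHom (qD gT.hom hg (fun i => (Att i).hom) i : C(Dc, glueObj Sc Dc Y gT hg Att))

theorem glue_condition :
    Limits.Sigma.desc Att ≫ glueInl Sc Dc Y gT hg Att =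
      Limits.Sigma.map (fun _ : E => gT) ≫ Limits.Sigma.desc (glueChar Sc Dc Y gT hg Att) := by
  apply Sigma.hom_ext
  intro i
  rw [← Category.assoc, ← Category.assoc]
  rw [Sigma.ι_desc]
  have : Sigma.ι (fun _ : E => Sc) i ≫ Limits.Sigma.map (fun _ : E => gT) =
      gT ≫ Sigma.ι (fun _ : E => Dc) i := by simp
  rw [this, Category.assoc, Sigma.ι_desc]
  apply TopCat.ext
  intro s
  exact ((qD_eq_qY_iff _ hg _).mpr ⟨s, rfl, rfl⟩).symm

/-- The pushout cocone on the glue space. -/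
noncomputable def glueCocone :
    PushoutCocone (Limits.Sigma.desc Att) (Limits.Sigma.map (fun _ : E => gT)) :=
  PushoutCocone.mk (glueInl Sc Dc Y gT hg Att) (Limits.Sigma.desc (glueChar Sc Dc Y gT hg Att))
    (glue_condition Sc Dc Y gT hg Att)

/-- The glue space is a pushout. -/
noncomputable def glueIsColimit : IsColimit (glueCocone Sc Dc Y gT hg Att) := by
  refine PushoutCocone.IsColimit.mk _ (fun s => ?_) (fun s => ?_) (fun s => ?_) (fun s m hl hr => ?_)
  · -- desc
    refine (ConcreteCategory.ofHom (glueDesc gT.hom hg _ s.inl.hom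
      (fun i => (Sigma.ι (fun _ : E => Dc) i ≫ s.inr).hom) ?_ : C(_, s.pt)) :
        glueObj Sc Dc Y gT hg Att ⟶ s.pt)
    intro i x
    have hcond := s.condition
    have h1 : Sigma.ι (fun _ : E => Sc) i ≫ Limits.Sigma.desc Att ≫ s.inl =
        Sigma.ι (fun _ : E => Sc) i ≫ Limits.Sigma.map (fun _ : E => gT) ≫ s.inr := by
      rw [hcond]
    rw [← Category.assoc, Sigma.ι_desc] at h1
    have h2 : Sigma.ι (fun _ : E => Sc) i ≫ Limits.Sigma.map (fun _ : E => gT) =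
        gT ≫ Sigma.ι (fun _ : E => Dc) i := by simp
    rw [← Category.assoc, h2, Category.assoc] at h1
    exact (ConcreteCategory.congr_hom h1 x).symm
  · -- fac left
    apply TopCat.ext; intro y; rfl
  · -- fac right
    apply Sigma.hom_ext
    intro i
    rw [← Category.assoc, Sigma.ι_desc]
    apply TopCat.ext; intro d; rfl
  · -- uniq
    apply TopCat.ext
    intro z
    rcases glue_cases gT.hom hg (fun i => (Att i).hom) z with ⟨y, rfl⟩ | ⟨i, d, rfl⟩
    · exact ConcreteCategory.congr_hom hl y
    · have h3 : glueChar Sc Dc Y gT hg Att i ≫ m = Sigma.ι (fun _ : E => Dc) i ≫ s.inr := by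
        rw [← Sigma.ι_desc (glueChar Sc Dc Y gT hg Att) i, Category.assoc, hr]
      exact ConcreteCategory.congr_hom h3 d

/-- Comparison isomorphism between the abstract pushout and the glue space. -/
noncomputable def glueIsoPushout :
    pushout (Limits.Sigma.desc Att) (Limits.Sigma.map (fun _ : E => gT)) ≅
      glueObj Sc Dc Y gT hg Att :=
  colimit.isoColimitCocone ⟨glueCocone Sc Dc Y gT hg Att, glueIsColimit Sc Dc Y gT hg Att⟩

theorem inl_glueIsoPushout_hom :
    pushout.inl (Limits.Sigma.desc Att) (Limits.Sigma.map (fun _ : E => gT)) ≫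
      (glueIsoPushout Sc Dc Y gT hg Att).hom = glueInl Sc Dc Y gT hg Att :=
  colimit.isoColimitCocone_ι_hom ⟨glueCocone Sc Dc Y gT hg Att, glueIsColimit Sc Dc Y gT hg Att⟩
    WalkingSpan.left

theorem ι_inr_glueIsoPushout_hom (i : E) :
    Sigma.ι (fun _ : E => Dc) i ≫
      pushout.inr (Limits.Sigma.desc Att) (Limits.Sigma.map (fun _ : E => gT)) ≫
      (glueIsoPushout Sc Dc Y gT hg Att).hom = glueChar Sc Dc Y gT hg Att i := by
  have h := colimit.isoColimitCocone_ι_hom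
    ⟨glueCocone Sc Dc Y gT hg Att, glueIsColimit Sc Dc Y gT hg Att⟩ WalkingSpan.right
  have h2 : pushout.inr (Limits.Sigma.desc Att) (Limits.Sigma.map (fun _ : E => gT)) ≫
      (glueIsoPushout Sc Dc Y gT hg Att).hom =
      Limits.Sigma.desc (glueChar Sc Dc Y gT hg Att) := h
  rw [h2, Sigma.ι_desc]

end Categorical

end CtrlDom


namespace CtrlDom

universe u

open CategoryTheory Limits Topology RelativeCWComplex

section Disks

instance (n : ℤ) : CompactSpace ↥(sphere n) :=
  show CompactSpace (ULift (Metric.sphere (0 : EuclideanSpace ℝ <| Fin <| (n + 1).toNat) 1)) from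
    inferInstance

instance (n : ℤ) : CompactSpace ↥(disk n) := by
  have : CompactSpace (Metric.closedBall (0 : EuclideanSpace ℝ (Fin n.toNat)) 1) :=
    isCompact_iff_compactSpace.mp (isCompact_closedBall _ _)
  exact show CompactSpace (ULift (Metric.closedBall (0 : EuclideanSpace ℝ <| Fin n.toNat) 1)) from
    inferInstance

instance (n : ℤ) : T2Space ↥(disk n) :=
  show T2Space (ULift (Metric.closedBall (0 : EuclideanSpace ℝ <| Fin n.toNat) 1)) from
    inferInstance

instance (n : ℤ) : T1Space ↥(disk n) := inferInstance

theorem sphereInclusion_injective (n : ℤ) : Function.Injective (sphereInclusion n) := by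
  rintro ⟨⟨p, hp⟩⟩ ⟨⟨q, hq⟩⟩ h
  have : p = q := congrArg (fun x => (ULift.down x).1) h
  subst this
  rfl

theorem sphereInclusion_isClosedMap (n : ℤ) : IsClosedMap (sphereInclusion n) :=
  ((sphereInclusion n).hom.continuous.isClosedEmbedding (sphereInclusion_injective n)).isClosedMap

end Disks

section Attach

variable {X X' : TopCat.{0}} {k : ℤ} (att : RelativeCWComplex.AttachCells X X' k)

/-- The glue-model of an attachment. -/
noncomputable def attachGlueObj : TopCat.{0} :=
  glueObj (sphere k) (disk (k + 1)) X (sphereInclusion k) (sphereInclusion_injective k) att.attachMaps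

/-- Comparison iso between the result of attaching cells and the glue model. -/
noncomputable def attachIso : X' ≅ attachGlueObj att :=
  att.iso_pushout ≪≫ pushoutSymmetry _ _ ≪≫
    glueIsoPushout (sphere k) (disk (k + 1)) X (sphereInclusion k) (sphereInclusion_injective k)
      att.attachMaps

theorem attach_inclusion_attachIso_hom :
    (AttachCells.inclusion _ _ _ att) ≫ (attachIso att).hom =
      glueInl (sphere k) (disk (k + 1)) X (sphereInclusion k) (sphereInclusion_injective k)
        att.attachMaps := by
  show (pushout.inr _ _ ≫ att.iso_pushout.inv) ≫ (att.iso_pushout.hom ≫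
    (pushoutSymmetry (sigmaSphereInclusion k att.cells) (sigmaAttachMap X k att.cells att.attachMaps)).hom ≫
    (glueIsoPushout (sphere k) (disk (k + 1)) X (sphereInclusion k) (sphereInclusion_injective k)
      att.attachMaps).hom) = _
  rw [Category.assoc, ← Category.assoc att.iso_pushout.inv, Iso.inv_hom_id,
    Category.id_comp]
  exact (inr_comp_pushoutSymmetry_hom_assoc _ _ _).trans (inl_glueIsoPushout_hom _ _ _ _ _ _)

theorem glueInl_isIso {Sc Dc Y : TopCat.{u}} {E : Type u} (gT : Sc ⟶ Dc)
    (hg : Function.Injective gT) (Att : E → (Sc ⟶ Y)) [IsEmpty E] :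
    IsIso (glueInl Sc Dc Y gT hg Att) := by
  refine ⟨⟨TopCat.ofHom (glueDesc gT.hom hg _ (ContinuousMap.id _)
    (fun i => (IsEmpty.false i).elim) (fun i => (IsEmpty.false i).elim) :
      C(glueObj Sc Dc Y gT hg Att, Y)), ?_, ?_⟩⟩
  · apply TopCat.ext; intro y; rfl
  · apply TopCat.ext; intro z
    rcases glue_cases gT.hom hg (fun i => (Att i).hom) z with ⟨y, rfl⟩ | ⟨i, _, _⟩
    · rfl
    · exact (IsEmpty.false i).elim

theorem attach_inclusion_isIso (h : IsEmpty att.cells) : IsIso (AttachCells.inclusion _ _ _ att) := by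
  haveI := h
  haveI : IsIso (glueInl (sphere k) (disk (k + 1)) X (sphereInclusion k) (sphereInclusion_injective k)
      att.attachMaps) :=
    glueInl_isIso _ _ _
  have heq : (AttachCells.inclusion _ _ _ att) =
      glueInl (sphere k) (disk (k + 1)) X (sphereInclusion k) (sphereInclusion_injective k)
        att.attachMaps ≫ (attachIso att).inv := by
    exact (Iso.eq_comp_inv _).mpr (attach_inclusion_attachIso_hom att)
  rw [heq]
  exact @IsIso.comp_isIso _ _ _ _ _ _ _ this (Iso.isIso_inv _)

end Attach

section Stabilize

universe v

theorem isIso_colimit_ι_of_stable {C : Type*} [Category.{v} C] (F : ℕ ⥤ C) [HasColimit F]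
    (m : ℕ) (hstep : ∀ j, m ≤ j → IsIso (F.map (homOfLE (Nat.le_succ j)))) :
    IsIso (colimit.ι F m) := by
  have key : ∀ j (hj : m ≤ j), IsIso (F.map (homOfLE hj)) := by
    intro j
    induction j with
    | zero =>
      intro hj
      obtain rfl : m = 0 := Nat.le_zero.mp hj
      have : homOfLE hj = 𝟙 (0 : ℕ) := rfl
      rw [this, F.map_id]
      infer_instance
    | succ j ih =>
      intro hj
      by_cases hj' : m ≤ j
      · have : homOfLE hj = homOfLE hj' ≫ homOfLE (Nat.le_succ j) := rfl
        rw [this, Functor.map_comp]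
        haveI := ih hj'
        haveI := hstep j hj'
        infer_instance
      · obtain rfl : m = j + 1 := le_antisymm hj (Nat.not_le.mp hj')
        have : homOfLE hj = 𝟙 (j + 1 : ℕ) := rfl
        rw [this, F.map_id]
        infer_instance
  let t : ∀ j : ℕ, F.obj j ⟶ F.obj m := fun j =>
    if hj : j ≤ m then F.map (homOfLE hj) else
      haveI := key j (le_of_not_ge hj)
      inv (F.map (homOfLE (le_of_not_ge hj)))
  have hnat : ∀ (j j' : ℕ) (f : j ⟶ j'), F.map f ≫ t j' = t j := by
    intro j j' f
    have hle : j ≤ j' := leOfHom f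
    have hf : f = homOfLE hle := rfl
    subst hf
    by_cases h2 : j' ≤ m
    · have h1 : j ≤ m := hle.trans h2
      simp only [t, dif_pos h1, dif_pos h2, ← F.map_comp]
      congr 1
    · by_cases h1 : j ≤ m
      · simp only [t, dif_pos h1, dif_neg h2]
        haveI := key j' (le_of_not_ge h2)
        rw [IsIso.comp_inv_eq, ← F.map_comp]
        congr 1
      · simp only [t, dif_neg h1, dif_neg h2]
        haveI := key j (le_of_not_ge h1)
        haveI := key j' (le_of_not_ge h2)
        rw [IsIso.comp_inv_eq, IsIso.eq_inv_comp, ← F.map_comp]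
        congr 1
  let c : Cocone F :=
    { pt := F.obj m
      ι :=
        { app := t
          naturality := by
            intro j j' f
            simp only [Functor.const_obj_obj, Functor.const_obj_map, Category.comp_id]
            exact hnat j j' f } }
  refine ⟨⟨colimit.desc F c, ?_, ?_⟩⟩
  · rw [colimit.ι_desc]
    show t m = _
    simp only [t, dif_pos (le_refl m)]
    have : homOfLE (le_refl m) = 𝟙 m := rfl
    rw [this, F.map_id]
  · apply colimit.hom_ext
    intro j
    rw [← Category.assoc, colimit.ι_desc, Category.comp_id]
    show t j ≫ colimit.ι F m = colimit.ι F j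
    by_cases h1 : j ≤ m
    · simp only [t, dif_pos h1]
      exact colimit.w F (homOfLE h1)
    · simp only [t, dif_neg h1]
      haveI := key j (le_of_not_ge h1)
      rw [IsIso.inv_comp_eq]
      exact (colimit.w F (homOfLE (le_of_not_ge h1))).symm

/-- If there are no cells in dimensions `≥ m`, the CW complex is its `m`-th skeleton. -/
noncomputable def skeletonIso (Xc : RelativeCWComplex) (m : ℕ)
    (hm : ∀ k, m ≤ k → IsEmpty ((Xc.attachCells k).cells)) :
    Xc.toTopCat ≅ Xc.sk m := by
  haveI : IsIso (colimit.ι (Functor.ofSequence Xc.skInclusion) m) := by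
    apply isIso_colimit_ι_of_stable
    intro j hj
    have : (Functor.ofSequence Xc.skInclusion).map (homOfLE (Nat.le_succ j)) =
        Xc.skInclusion j := Functor.ofSequence_map_homOfLE_succ _ j
    rw [this]
    exact attach_inclusion_isIso _ (hm j hj)
  exact (asIso (colimit.ι (Functor.ofSequence Xc.skInclusion) m)).symm

end Stabilize

end CtrlDom


namespace CtrlDom

universe u v w

open CategoryTheory Limits Topology RelativeCWComplex

theorem discreteTopology_of_forall_isClosed {X : Type u} [TopologicalSpace X] {S : Set X}
    (h : ∀ T, T ⊆ S → IsClosed T) : DiscreteTopology S := by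
  rw [discreteTopology_iff_forall_isClosed]
  intro T
  have : T = Subtype.val ⁻¹' (Subtype.val '' T) := by
    rw [Set.preimage_image_eq _ Subtype.val_injective]
  rw [this]
  exact (h _ (by rintro x ⟨⟨y, hy⟩, _, rfl⟩; exact hy)).preimage continuous_subtype_val

section Skeleta

variable (cw : CWComplex)

/-- Cell index type in "disk dimension" `k` (cells attached going from `sk k` to `sk (k+1)`). -/
abbrev ET (k : ℕ) : Type := (cw.attachCells k).cells

/-- Boundary sphere inclusion for level-`k` attachments. -/
noncomputable abbrev gk (k : ℕ) : C(↥(sphere ((k : ℤ) - 1)), ↥(disk ((k : ℤ) - 1 + 1))) :=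
  TopCat.Hom.hom (sphereInclusion ((k : ℤ) - 1) : sphere ((k : ℤ) - 1) ⟶ disk ((k : ℤ) - 1 + 1))

/-- Attaching maps. -/
noncomputable abbrev AT (k : ℕ) (i : ET cw k) : C(↥(sphere ((k : ℤ) - 1)), ↥(cw.sk k)) :=
  TopCat.Hom.hom ((cw.attachCells k).attachMaps i : sphere ((k : ℤ) - 1) ⟶ cw.sk k)

/-- The glue model of `sk (k+1)`. -/
noncomputable abbrev GT (k : ℕ) : Type := ↥(attachGlueObj (cw.attachCells k))

/-- Comparison homeomorphism `sk (k+1) ≃ₜ` glue model. -/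
noncomputable def psi (k : ℕ) : ↥(cw.sk (k + 1)) ≃ₜ GT cw k :=
  TopCat.homeoOfIso (attachIso (cw.attachCells k))

/-- The base inclusion into the glue model. -/
noncomputable def qy (k : ℕ) : C(↥(cw.sk k), GT cw k) :=
  TopCat.Hom.hom (glueInl _ _ _ (sphereInclusion ((k : ℤ) - 1)) (sphereInclusion_injective _)
    (cw.attachCells k).attachMaps :
    cw.sk k ⟶ attachGlueObj (cw.attachCells k))

/-- Characteristic maps into the glue model. -/
noncomputable def qd (k : ℕ) (i : ET cw k) : C(↥(disk ((k : ℤ) - 1 + 1)), GT cw k) :=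
  TopCat.Hom.hom (glueChar _ _ _ (sphereInclusion ((k : ℤ) - 1)) (sphereInclusion_injective _)
    (cw.attachCells k).attachMaps i :
    disk ((k : ℤ) - 1 + 1) ⟶ attachGlueObj (cw.attachCells k))

/-- Skeletal inclusion as a continuous map. -/
noncomputable def incC (k : ℕ) : C(↥(cw.sk k), ↥(cw.sk (k + 1))) :=
  TopCat.Hom.hom (cw.toRelativeCWComplex.skInclusion k : cw.sk k ⟶ cw.sk (k + 1))

theorem psi_incC (k : ℕ) (x : ↥(cw.sk k)) : psi cw k (incC cw k x) = qy cw k x :=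
  ConcreteCategory.congr_hom (attach_inclusion_attachIso_hom (cw.attachCells k)) x

theorem qy_eq_qd_iff {k : ℕ} {y : ↥(cw.sk k)} {i : ET cw k} {d : ↥(disk ((k : ℤ) - 1 + 1))} :
    qy cw k y = qd cw k i d ↔ ∃ s, gk k s = d ∧ AT cw k i s = y :=
  qY_eq_qD_iff _ _ _

theorem qd_eq_qy_iff {k : ℕ} {y : ↥(cw.sk k)} {i : ET cw k} {d : ↥(disk ((k : ℤ) - 1 + 1))} :
    qd cw k i d = qy cw k y ↔ ∃ s, gk k s = d ∧ AT cw k i s = y :=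
  qD_eq_qY_iff _ _ _

theorem qd_eq_qd_iff {k : ℕ} {i j : ET cw k} {d d' : ↥(disk ((k : ℤ) - 1 + 1))} :
    qd cw k i d = qd cw k j d' ↔
      ((⟨i, d⟩ : Σ _ : ET cw k, ↥(disk ((k : ℤ) - 1 + 1))) = ⟨j, d'⟩) ∨
        ∃ s s', gk k s = d ∧ gk k s' = d' ∧ AT cw k i s = AT cw k j s' :=
  qD_eq_qD_iff _ _ _

theorem glue_cases' {k : ℕ} (z : GT cw k) :
    (∃ y, z = qy cw k y) ∨ ∃ i d, z = qd cw k i d :=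
  glue_cases _ _ _ z

theorem qy_injective' (k : ℕ) : Function.Injective (qy cw k) := qY_injective _ _ _

theorem qy_isClosedEmbedding (k : ℕ) : IsClosedEmbedding (qy cw k) :=
  CtrlDom.qY_isClosedEmbedding _ _ _ (sphereInclusion_isClosedMap _)

theorem incC_isClosedEmbedding (k : ℕ) : IsClosedEmbedding (incC cw k) := by
  have : (incC cw k : ↥(cw.sk k) → ↥(cw.sk (k + 1))) =
      (psi cw k).symm ∘ (qy cw k) := by
    funext x
    rw [Function.comp_apply, ← psi_incC cw k x, Homeomorph.symm_apply_apply]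
  rw [this]
  exact (psi cw k).symm.isClosedEmbedding.comp (qy_isClosedEmbedding cw k)

/-- Iterated skeletal inclusions. -/
noncomputable def incl : (b : ℕ) → (a : ℕ) → a ≤ b → C(↥(cw.sk a), ↥(cw.sk b))
  | 0, 0, _ => ContinuousMap.id _
  | 0, _ + 1, h => absurd h (by omega)
  | b + 1, a, h =>
    if h' : a = b + 1 then h' ▸ ContinuousMap.id _
    else (incC cw b).comp (incl b a (by omega))

theorem incl_self (b : ℕ) (h : b ≤ b) : incl cw b b h = ContinuousMap.id _ := by
  cases b with
  | zero => rfl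
  | succ b => simp [incl]

theorem incl_top (b a : ℕ) (h : a ≤ b) (h2 : a ≤ b + 1) :
    incl cw (b + 1) a h2 = (incC cw b).comp (incl cw b a h) := by
  have h' : a ≠ b + 1 := by omega
  simp [incl, h']

theorem incl_trans (c b a : ℕ) (h1 : a ≤ b) (h2 : b ≤ c) (h3 : a ≤ c) :
    (incl cw c b h2).comp (incl cw b a h1) = incl cw c a h3 := by
  induction c with
  | zero =>
    obtain rfl : b = 0 := by omega
    obtain rfl : a = 0 := by omega
    rfl
  | succ c ih =>
    by_cases hb : b = c + 1
    · subst hb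
      rw [incl_self]
      apply ContinuousMap.ext; intro x; rfl
    · have hbc : b ≤ c := by omega
      rw [incl_top cw c b hbc h2, incl_top cw c a (by omega) h3, ContinuousMap.comp_assoc,
        ih hbc (by omega)]

theorem incl_bot (b k : ℕ) (h : k + 1 ≤ b) (x : ↥(cw.sk k)) :
    incl cw b (k + 1) h (incC cw k x) = incl cw b k (by omega) x := by
  have h0 : incC cw k = incl cw (k + 1) k (Nat.le_succ k) := by
    rw [incl_top cw k k le_rfl (Nat.le_succ k), incl_self]
    apply ContinuousMap.ext; intro y; rfl
  rw [h0]
  exact ContinuousMap.congr_fun (incl_trans cw b (k + 1) k (Nat.le_succ k) h (by omega)) x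

theorem incl_isClosedEmbedding (b a : ℕ) (h : a ≤ b) :
    IsClosedEmbedding (incl cw b a h) := by
  induction b with
  | zero =>
    obtain rfl : a = 0 := by omega
    rw [incl_self]
    exact Homeomorph.refl _ |>.isClosedEmbedding
  | succ b ih =>
    by_cases h' : a = b + 1
    · subst h'
      rw [incl_self]
      exact Homeomorph.refl _ |>.isClosedEmbedding
    · rw [incl_top cw b a (by omega) h]
      exact (incC_isClosedEmbedding cw b).comp (ih (by omega))

instance sk_zero_isEmpty : IsEmpty ↥(cw.sk 0) := cw.isEmpty_sk_zero

/-- Interior points of the disk. -/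
def interiorD (k : ℕ) : Set ↥(disk ((k : ℤ) - 1 + 1)) := {d | d ∉ Set.range (gk k)}

/-- Open cell, inside `sk (k+1)`. -/
noncomputable def openCellIn (k : ℕ) (i : ET cw k) : Set ↥(cw.sk (k + 1)) :=
  (psi cw k).symm '' (qd cw k i '' interiorD k)

/-- Open cell, pushed up to `sk b`. -/
noncomputable def openCellAt (b k : ℕ) (h : k + 1 ≤ b) (i : ET cw k) : Set ↥(cw.sk b) :=
  incl cw b (k + 1) h '' openCellIn cw k i

/-- Closed cell, inside `sk (k+1)`. -/
noncomputable def closedCellIn (k : ℕ) (i : ET cw k) : Set ↥(cw.sk (k + 1)) :=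
  (psi cw k).symm '' Set.range (qd cw k i)

/-- Closed cell, pushed up to `sk b`. -/
noncomputable def closedCellAt (b k : ℕ) (h : k + 1 ≤ b) (i : ET cw k) : Set ↥(cw.sk b) :=
  incl cw b (k + 1) h '' closedCellIn cw k i

/-- Image of the attaching map, pushed up to `sk b`. -/
noncomputable def attRangeAt (b k : ℕ) (h : k ≤ b) (i : ET cw k) : Set ↥(cw.sk b) :=
  incl cw b k h '' Set.range (AT cw k i)

theorem psi_symm_qy (k : ℕ) (y : ↥(cw.sk k)) :
    (psi cw k).symm (qy cw k y) = incC cw k y := by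
  rw [← psi_incC cw k y, Homeomorph.symm_apply_apply]

theorem mem_openCellAt_iff {b k : ℕ} {h : k + 1 ≤ b} {i : ET cw k} {x : ↥(cw.sk b)} :
    x ∈ openCellAt cw b k h i ↔
      ∃ d, d ∈ interiorD k ∧ x = incl cw b (k + 1) h ((psi cw k).symm (qd cw k i d)) := by
  constructor
  · rintro ⟨z, ⟨w, ⟨d, hd, rfl⟩, rfl⟩, rfl⟩
    exact ⟨d, hd, rfl⟩
  · rintro ⟨d, hd, rfl⟩
    exact ⟨_, ⟨_, ⟨d, hd, rfl⟩, rfl⟩, rfl⟩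

theorem openCellAt_subset_closedCellAt {b k : ℕ} (h : k + 1 ≤ b) (i : ET cw k) :
    openCellAt cw b k h i ⊆ closedCellAt cw b k h i := by
  apply Set.image_mono
  apply Set.image_mono
  rintro d ⟨e, _, rfl⟩
  exact ⟨e, rfl⟩

theorem closedCellAt_subset {b k : ℕ} (h : k + 1 ≤ b) (i : ET cw k) :
    closedCellAt cw b k h i ⊆ openCellAt cw b k h i ∪ attRangeAt cw b k (by omega) i := by
  rintro x ⟨z, ⟨w, ⟨d, rfl⟩, rfl⟩, rfl⟩
  by_cases hd : d ∈ interiorD k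
  · exact Or.inl (mem_openCellAt_iff cw |>.mpr ⟨d, hd, rfl⟩)
  · simp only [interiorD, Set.mem_setOf_eq, not_not] at hd
    obtain ⟨s, rfl⟩ := hd
    right
    have h1 : qd cw k i (gk k s) = qy cw k (AT cw k i s) :=
      (qd_eq_qy_iff cw).mpr ⟨s, rfl, rfl⟩
    rw [h1, psi_symm_qy, incl_bot]
    exact ⟨AT cw k i s, ⟨s, rfl⟩, rfl⟩

theorem closedCellAt_isCompact {b k : ℕ} (h : k + 1 ≤ b) (i : ET cw k) :
    IsCompact (closedCellAt cw b k h i) := by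
  have h1 : Set.range (qd cw k i) = qd cw k i '' Set.univ := (Set.image_univ).symm
  have h2 : IsCompact (closedCellIn cw k i) := by
    rw [closedCellIn, h1]
    exact ((isCompact_univ.image (qd cw k i).continuous).image
      (psi cw k).symm.continuous)
  exact h2.image (incl cw b (k + 1) h).continuous

theorem attRangeAt_isCompact {b k : ℕ} (h : k ≤ b) (i : ET cw k) :
    IsCompact (attRangeAt cw b k h i) := by
  have : Set.range (AT cw k i) = AT cw k i '' Set.univ := (Set.image_univ).symm
  rw [attRangeAt, this]
  exact ((isCompact_univ.image (AT cw k i).continuous).image (incl cw b k h).continuous)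

/-- Every point of a skeleton lies in some open cell. -/
theorem exists_openCellAt : ∀ (b : ℕ) (x : ↥(cw.sk b)),
    ∃ (k : ℕ) (h : k + 1 ≤ b) (i : ET cw k), x ∈ openCellAt cw b k h i := by
  intro b
  induction b with
  | zero => exact fun x => (IsEmpty.false x).elim
  | succ b ih =>
    intro x
    have hup : ∀ y : ↥(cw.sk b), (∃ (k : ℕ) (h : k + 1 ≤ b) (i : ET cw k),
        y ∈ openCellAt cw b k h i) → ∃ (k : ℕ) (h : k + 1 ≤ b + 1) (i : ET cw k),
        incC cw b y ∈ openCellAt cw (b + 1) k h i := by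
      rintro y ⟨k, hk, i, hy⟩
      refine ⟨k, by omega, i, ?_⟩
      obtain ⟨d, hd, rfl⟩ := mem_openCellAt_iff cw |>.mp hy
      rw [mem_openCellAt_iff cw]
      refine ⟨d, hd, ?_⟩
      have : incl cw (b + 1) (k + 1) (by omega) = (incC cw b).comp (incl cw b (k + 1) hk) :=
        incl_top cw b (k + 1) hk (by omega)
      rw [this]
      rfl
    rcases glue_cases' cw (psi cw b x) with ⟨y, hy⟩ | ⟨i, d, hd⟩
    · have hx : x = incC cw b y := by
        rw [← psi_symm_qy, ← hy, Homeomorph.symm_apply_apply]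
      rw [hx]
      exact hup y (ih y)
    · by_cases hint : d ∈ interiorD b
      · refine ⟨b, le_rfl, i, ?_⟩
        rw [mem_openCellAt_iff cw]
        refine ⟨d, hint, ?_⟩
        rw [incl_self]
        show x = (psi cw b).symm (qd cw b i d)
        rw [← hd, Homeomorph.symm_apply_apply]
      · simp only [interiorD, Set.mem_setOf_eq, not_not] at hint
        obtain ⟨s, rfl⟩ := hint
        have h1 : qd cw b i (gk b s) = qy cw b (AT cw b i s) :=
          (qd_eq_qy_iff cw).mpr ⟨s, rfl, rfl⟩
        have hx : x = incC cw b (AT cw b i s) := by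
          rw [← psi_symm_qy, ← h1, ← hd, Homeomorph.symm_apply_apply]
        rw [hx]
        exact hup _ (ih _)


theorem isClosed_glue_iff' {k : ℕ} {T : Set (GT cw k)} :
    IsClosed T ↔ IsClosed (qy cw k ⁻¹' T) ∧ ∀ i, IsClosed (qd cw k i ⁻¹' T) :=
  isClosed_glue_iff _ _ _

theorem not_mem_openCellAt_of_lt {b k k' : ℕ} (hkk : k < k') {h : k + 1 ≤ b}
    {h' : k' + 1 ≤ b} {i : ET cw k} {i' : ET cw k'} {x : ↥(cw.sk b)}
    (hx : x ∈ openCellAt cw b k h i) (hx' : x ∈ openCellAt cw b k' h' i') : False := by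
  obtain ⟨d, hd, rfl⟩ := (mem_openCellAt_iff cw).mp hx
  obtain ⟨d', hd', heq⟩ := (mem_openCellAt_iff cw).mp hx'
  have hk1 : k + 1 ≤ k' := by omega
  have hcomp : incl cw b (k + 1) h ((psi cw k).symm (qd cw k i d)) =
      incl cw b (k' + 1) h' (incl cw (k' + 1) (k + 1) (by omega)
        ((psi cw k).symm (qd cw k i d))) :=
    (ContinuousMap.congr_fun (incl_trans cw b (k' + 1) (k + 1) (by omega) h' h) _).symm
  have hinj := (incl_isClosedEmbedding cw b (k' + 1) h').injective
  have hz : incl cw (k' + 1) (k + 1) (by omega) ((psi cw k).symm (qd cw k i d)) =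
      (psi cw k').symm (qd cw k' i' d') := hinj (by rw [← hcomp, ← heq])
  have h2 : incl cw (k' + 1) (k + 1) (by omega) ((psi cw k).symm (qd cw k i d)) =
      incC cw k' (incl cw k' (k + 1) hk1 ((psi cw k).symm (qd cw k i d))) := by
    rw [incl_top cw k' (k + 1) hk1 (by omega)]
    rfl
  rw [h2] at hz
  have h3 : qd cw k' i' d' = qy cw k' (incl cw k' (k + 1) hk1 ((psi cw k).symm (qd cw k i d))) := by
    have := congrArg (psi cw k') hz
    rwa [Homeomorph.apply_symm_apply, psi_incC, eq_comm] at this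
  obtain ⟨s, hs, _⟩ := (qd_eq_qy_iff cw).mp h3
  exact hd' ⟨s, hs⟩

theorem openCellAt_pair_eq {b k k' : ℕ} {h : k + 1 ≤ b} {h' : k' + 1 ≤ b}
    {i : ET cw k} {i' : ET cw k'} {x : ↥(cw.sk b)}
    (hx : x ∈ openCellAt cw b k h i) (hx' : x ∈ openCellAt cw b k' h' i') :
    (⟨k, i⟩ : Σ k, ET cw k) = ⟨k', i'⟩ := by
  rcases lt_trichotomy k k' with hlt | rfl | hgt
  · exact (not_mem_openCellAt_of_lt cw hlt hx hx').elim
  · obtain ⟨d, hd, rfl⟩ := (mem_openCellAt_iff cw).mp hx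
    obtain ⟨d', hd', heq⟩ := (mem_openCellAt_iff cw).mp hx'
    have hinj := (incl_isClosedEmbedding cw b (k + 1) h).injective
    have hz : (psi cw k).symm (qd cw k i d) = (psi cw k).symm (qd cw k i' d') := hinj heq
    have hq : qd cw k i d = qd cw k i' d' := (psi cw k).symm.injective hz
    rcases (qd_eq_qd_iff cw).mp hq with hsig | ⟨s, _, hgs, _⟩
    · have : i = i' := congrArg Sigma.fst hsig
      rw [this]
    · exact (hd ⟨s, hgs⟩).elim
  · exact (not_mem_openCellAt_of_lt cw hgt hx' hx).elim

theorem isClosed_of_subsingleton_cells (b : ℕ) (T : Set ↥(cw.sk b))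
    (hT : ∀ (k : ℕ) (h : k + 1 ≤ b) (i : ET cw k), (T ∩ openCellAt cw b k h i).Subsingleton) :
    IsClosed T := by
  have main : ∀ (a : ℕ) (h : a ≤ b), IsClosed (incl cw b a h ⁻¹' T) := by
    intro a
    induction a with
    | zero =>
      intro h
      have : (incl cw b 0 h ⁻¹' T) = ∅ := Set.eq_empty_of_isEmpty _
      rw [this]
      exact isClosed_empty
    | succ a ih =>
      intro h
      have hstep : a ≤ b := by omega
      set P := incl cw b (a + 1) h ⁻¹' T with hP
      rw [← Homeomorph.isClosed_image (psi cw a)]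
      rw [isClosed_glue_iff' cw]
      constructor
      · have heq : qy cw a ⁻¹' (psi cw a '' P) = incl cw b a hstep ⁻¹' T := by
          ext y
          simp only [Set.mem_preimage]
          constructor
          · rintro ⟨z, hz, hzy⟩
            have hzz : z = incC cw a y := by
              have := congrArg (psi cw a).symm hzy
              rwa [Homeomorph.symm_apply_apply, psi_symm_qy] at this
            rw [hzz] at hz
            rw [hP, Set.mem_preimage, incl_bot] at hz
            exact hz
          · intro hy
            refine ⟨incC cw a y, ?_, psi_incC cw a y⟩
            rw [hP, Set.mem_preimage, incl_bot]
            exact hy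
        rw [heq]
        exact ih hstep
      · intro i
        have hdecomp : qd cw a i ⁻¹' (psi cw a '' P) =
            (gk a '' (AT cw a i ⁻¹' (incl cw b a hstep ⁻¹' T))) ∪
              {d | d ∈ interiorD a ∧
                incl cw b (a + 1) h ((psi cw a).symm (qd cw a i d)) ∈ T} := by
          ext d
          simp only [Set.mem_preimage, Set.mem_union, Set.mem_setOf_eq]
          constructor
          · rintro ⟨z, hz, hzd⟩
            have hzz : z = (psi cw a).symm (qd cw a i d) := by
              rw [← hzd, Homeomorph.symm_apply_apply]
            by_cases hint : d ∈ interiorD a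
            · right
              refine ⟨hint, ?_⟩
              rw [← hzz]
              exact hz
            · left
              simp only [interiorD, Set.mem_setOf_eq, not_not] at hint
              obtain ⟨s, rfl⟩ := hint
              refine ⟨s, ?_, rfl⟩
              have h1 : qd cw a i (gk a s) = qy cw a (AT cw a i s) :=
                (qd_eq_qy_iff cw).mpr ⟨s, rfl, rfl⟩
              have hzz' : z = incC cw a (AT cw a i s) := by rw [hzz, h1, psi_symm_qy]
              rw [hzz'] at hz
              rw [hP, Set.mem_preimage, incl_bot] at hz
              simp only [Set.mem_preimage]
              exact hz
          · rintro (⟨s, hs, rfl⟩ | ⟨hint, hmem⟩)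
            · refine ⟨incC cw a (AT cw a i s), ?_, ?_⟩
              · rw [hP, Set.mem_preimage, incl_bot]
                exact hs
              · rw [psi_incC]
                exact (qy_eq_qd_iff cw).mpr ⟨s, rfl, rfl⟩
            · exact ⟨(psi cw a).symm (qd cw a i d), hmem, Homeomorph.apply_symm_apply _ _⟩
        rw [hdecomp]
        apply IsClosed.union
        · exact sphereInclusion_isClosedMap _ _ ((ih hstep).preimage (AT cw a i).continuous)
        · apply Set.Subsingleton.isClosed
          rintro d1 ⟨hint1, hmem1⟩ d2 ⟨hint2, hmem2⟩
          have hx1 : incl cw b (a + 1) h ((psi cw a).symm (qd cw a i d1)) ∈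
              T ∩ openCellAt cw b a h i :=
            ⟨hmem1, (mem_openCellAt_iff cw).mpr ⟨d1, hint1, rfl⟩⟩
          have hx2 : incl cw b (a + 1) h ((psi cw a).symm (qd cw a i d2)) ∈
              T ∩ openCellAt cw b a h i :=
            ⟨hmem2, (mem_openCellAt_iff cw).mpr ⟨d2, hint2, rfl⟩⟩
          have heqx := hT a h i hx1 hx2
          have hz := (incl_isClosedEmbedding cw b (a + 1) h).injective heqx
          have hq : qd cw a i d1 = qd cw a i d2 := (psi cw a).symm.injective hz
          rcases (qd_eq_qd_iff cw).mp hq with hsig | ⟨s, _, hgs, _⟩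
          · exact eq_of_heq (Sigma.mk.inj_iff.mp hsig).2
          · exact (hint1 ⟨s, hgs⟩).elim
  have hfin := main b le_rfl
  rw [incl_self] at hfin
  exact hfin

theorem finite_cellPairs_of_isCompact (b : ℕ) (Cs : Set ↥(cw.sk b)) (hC : IsCompact Cs) :
    {p : Σ k : ℕ, ET cw k |
      ∃ h : p.1 + 1 ≤ b, (Cs ∩ openCellAt cw b p.1 h p.2).Nonempty}.Finite := by
  classical
  set P := {p : Σ k : ℕ, ET cw k |
    ∃ h : p.1 + 1 ≤ b, (Cs ∩ openCellAt cw b p.1 h p.2).Nonempty} with hPdef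
  have hpick : ∀ p : ↥P, ∃ x, x ∈ Cs ∧ ∃ h : p.1.1 + 1 ≤ b, x ∈ openCellAt cw b p.1.1 h p.1.2 := by
    rintro ⟨p, hp⟩
    obtain ⟨h, x, hx⟩ := hp
    exact ⟨x, hx.1, h, hx.2⟩
  choose F hF using hpick
  have hFC : ∀ p, F p ∈ Cs := fun p => (hF p).1
  have hFcell : ∀ (p : ↥P) (h : p.1.1 + 1 ≤ b), F p ∈ openCellAt cw b p.1.1 h p.1.2 := by
    intro p h
    obtain ⟨h', hx⟩ := (hF p).2
    exact hx
  have hFinj : Function.Injective F := by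
    intro p q hpq
    obtain ⟨hp, _⟩ := p.2
    obtain ⟨hq, _⟩ := q.2
    have := openCellAt_pair_eq cw (hFcell p hp) (hpq ▸ hFcell q hq)
    exact Subtype.ext this
  set S := Set.range F with hS
  have hScl : ∀ T, T ⊆ S → IsClosed T := by
    intro T hTS
    apply isClosed_of_subsingleton_cells cw b T
    intro k h i x hx y hy
    obtain ⟨p, rfl⟩ := hTS hx.1
    obtain ⟨hp, _⟩ := p.2
    obtain ⟨q, rfl⟩ := hTS hy.1
    obtain ⟨hq, _⟩ := q.2
    have e1 := openCellAt_pair_eq cw (hFcell p hp) hx.2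
    have e2 := openCellAt_pair_eq cw (hFcell q hq) hy.2
    have : p = q := Subtype.ext (e1.trans e2.symm)
    rw [this]
  have hSsub : S ⊆ Cs := by
    rintro x ⟨p, rfl⟩
    exact hFC p
  have hcomp : IsCompact S := hC.of_isClosed_subset (hScl S le_rfl) hSsub
  haveI : DiscreteTopology ↥S := discreteTopology_of_forall_isClosed hScl
  have hSfin : S.Finite := hcomp.finite ⟨inferInstance⟩
  haveI : Finite ↥S := hSfin.to_subtype
  haveI : Finite ↥P := Finite.of_injective
    (fun p => (⟨F p, ⟨p, rfl⟩⟩ : ↥S))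
    (fun p q hpq => hFinj (congrArg Subtype.val hpq))
  exact P.toFinite


section Choose

variable (m : ℕ) (Cs : Set ↥(cw.sk m))

/-- The finite system of cells needed to cover `Cs`, chosen by downward recursion. -/
noncomputable def sigmaSet (k : ℕ) : Set (ET cw k) :=
  if h : k + 1 ≤ m then
    {i | (openCellAt cw m k h i ∩
      (Cs ∪ ⋃ (k' : ℕ) (hk' : k < k') (h' : k' + 1 ≤ m), ⋃ i' ∈ sigmaSet k',
        attRangeAt cw m k' (by omega) i')).Nonempty}
  else ∅
termination_by m - k
decreasing_by omega

/-- The target set used at stage `k`. -/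
noncomputable def bigSet (k : ℕ) : Set ↥(cw.sk m) :=
  Cs ∪ ⋃ (k' : ℕ) (hk' : k < k') (h' : k' + 1 ≤ m), ⋃ i' ∈ sigmaSet cw m Cs k',
    attRangeAt cw m k' (by omega) i'

theorem sigmaSet_eq (k : ℕ) :
    sigmaSet cw m Cs k = if h : k + 1 ≤ m then
      {i | (openCellAt cw m k h i ∩ bigSet cw m Cs k).Nonempty} else ∅ := by
  rw [sigmaSet]
  rfl

theorem sigmaSet_eq_empty_of_le {k : ℕ} (h : ¬(k + 1 ≤ m)) : sigmaSet cw m Cs k = ∅ := by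
  rw [sigmaSet_eq, dif_neg h]

theorem mem_sigmaSet_of_nonempty {k : ℕ} (h : k + 1 ≤ m) {i : ET cw k}
    (hne : (openCellAt cw m k h i ∩ bigSet cw m Cs k).Nonempty) : i ∈ sigmaSet cw m Cs k := by
  rw [sigmaSet_eq, dif_pos h]
  exact hne

theorem attRangeAt_subset_bigSet {k k' : ℕ} (hkk : k < k') (h' : k' + 1 ≤ m)
    {i' : ET cw k'} (hi' : i' ∈ sigmaSet cw m Cs k') :
    attRangeAt cw m k' (by omega) i' ⊆ bigSet cw m Cs k := by
  intro x hx
  right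
  refine Set.mem_iUnion.mpr ⟨k', Set.mem_iUnion.mpr ⟨hkk, Set.mem_iUnion.mpr ⟨h', ?_⟩⟩⟩
  exact Set.mem_biUnion hi' hx

theorem Cs_subset_bigSet (k : ℕ) : Cs ⊆ bigSet cw m Cs k := Set.subset_union_left

theorem sigmaSet_finite (hCs : IsCompact Cs) : ∀ k, (sigmaSet cw m Cs k).Finite := by
  classical
  -- downward strong induction on `m - k`
  have main : ∀ (d : ℕ) (k : ℕ), m - k ≤ d → (sigmaSet cw m Cs k).Finite := by
    intro d
    induction d with
    | zero =>
      intro k hk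
      rw [sigmaSet_eq_empty_of_le cw m Cs (by omega)]
      exact Set.finite_empty
    | succ d ih =>
      intro k hk
      by_cases h : k + 1 ≤ m
      · -- `bigSet k` is compact
        have hbig : IsCompact (bigSet cw m Cs k) := by
          have hbU : IsCompact (⋃ (k' : ℕ) (hk' : k < k') (h' : k' + 1 ≤ m),
              ⋃ i' ∈ sigmaSet cw m Cs k', attRangeAt cw m k' (by omega) i') := by
            have hrw : (⋃ (k' : ℕ) (hk' : k < k') (h' : k' + 1 ≤ m),
                ⋃ i' ∈ sigmaSet cw m Cs k', attRangeAt cw m k' (by omega) i') =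
                ⋃ (k' : ℕ) (_ : k' ∈ Finset.Ico (k + 1) m),
                  ⋃ (p : ↥(sigmaSet cw m Cs k')),
                    if h'' : k' + 1 ≤ m then attRangeAt cw m k' (by omega) p.1 else ∅ := by
              ext x
              simp only [Set.mem_iUnion, Finset.mem_Ico]
              constructor
              · rintro ⟨k', hk', h', i', hi', hx⟩
                exact ⟨k', ⟨by omega, by omega⟩, ⟨i', hi'⟩, by rw [dif_pos h']; exact hx⟩
              · rintro ⟨k', ⟨h1, h2⟩, ⟨i', hi'⟩, hx⟩
                rw [dif_pos (by omega : k' + 1 ≤ m)] at hx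
                exact ⟨k', by omega, by omega, i', hi', hx⟩
            rw [hrw]
            apply Set.Finite.isCompact_biUnion (Finset.finite_toSet _)
            intro k' hk'
            simp only [Finset.coe_Ico, Set.mem_Ico] at hk'
            haveI : Finite ↥(sigmaSet cw m Cs k') := (ih k' (by omega)).to_subtype
            apply isCompact_iUnion
            intro p
            rw [dif_pos (by omega : k' + 1 ≤ m)]
            exact attRangeAt_isCompact cw _ _
          exact hCs.union hbU
        -- now use the finiteness of cell pairs
        have hfin := finite_cellPairs_of_isCompact cw m (bigSet cw m Cs k) hbig
        have hsub : Set.MapsTo (fun i => (⟨k, i⟩ : Σ k', ET cw k'))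
            (sigmaSet cw m Cs k)
            {p : Σ k' : ℕ, ET cw k' |
              ∃ h : p.1 + 1 ≤ m, ((bigSet cw m Cs k) ∩ openCellAt cw m p.1 h p.2).Nonempty} := by
          intro i hi
          rw [sigmaSet_eq, dif_pos h] at hi
          obtain ⟨x, hx1, hx2⟩ := hi
          exact ⟨h, x, hx2, hx1⟩
        have hinj : Set.InjOn (fun i => (⟨k, i⟩ : Σ k', ET cw k')) (sigmaSet cw m Cs k) := by
          intro i _ i' _ hii
          exact eq_of_heq (Sigma.mk.inj_iff.mp hii).2
        exact Set.Finite.of_finite_image (hfin.subset hsub.image_subset) hinj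
      · rw [sigmaSet_eq_empty_of_le cw m Cs h]
        exact Set.finite_empty
  exact fun k => main (m - k) k le_rfl

/-- The subcomplex carrier set at level `K`. -/
noncomputable def subSet (K : ℕ) : Set ↥(cw.sk K) :=
  ⋃ (k : ℕ) (h : k + 1 ≤ K), ⋃ i ∈ sigmaSet cw m Cs k, closedCellAt cw K k h i

theorem subSet_zero : subSet cw m Cs 0 = ∅ := Set.eq_empty_of_isEmpty _

theorem subSet_succ (K : ℕ) :
    subSet cw m Cs (K + 1) =
      incC cw K '' subSet cw m Cs K ∪
        ⋃ i ∈ sigmaSet cw m Cs K, closedCellIn cw K i := by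
  ext x
  constructor
  · intro hx
    obtain ⟨k, hk, i, hi, hx⟩ := by
      simpa only [subSet, Set.mem_iUnion] using hx
    by_cases hkK : k = K
    · subst hkK
      right
      refine Set.mem_biUnion hi ?_
      rw [closedCellAt, incl_self] at hx
      simpa using hx
    · left
      have hk' : k + 1 ≤ K := by omega
      rw [closedCellAt, incl_top cw K (k + 1) hk' hk] at hx
      obtain ⟨z, hz, rfl⟩ := hx
      exact ⟨incl cw K (k + 1) hk' z,
        Set.mem_iUnion.mpr ⟨k, Set.mem_iUnion.mpr ⟨hk', Set.mem_biUnion hi ⟨z, hz, rfl⟩⟩⟩, rfl⟩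
  · rintro (⟨y, hy, rfl⟩ | hx)
    · obtain ⟨k, hk, i, hi, hy⟩ := by
        simpa only [subSet, Set.mem_iUnion] using hy
      refine Set.mem_iUnion.mpr ⟨k, Set.mem_iUnion.mpr ⟨by omega, Set.mem_biUnion hi ?_⟩⟩
      rw [closedCellAt, incl_top cw K (k + 1) hk (by omega)]
      rcases hy with ⟨z, hz, rfl⟩
      exact ⟨z, hz, rfl⟩
    · obtain ⟨i, hi, hx⟩ := by
        simpa only [Set.mem_iUnion] using hx
      refine Set.mem_iUnion.mpr ⟨K, Set.mem_iUnion.mpr ⟨le_rfl, Set.mem_biUnion hi ?_⟩⟩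
      rw [closedCellAt, incl_self]
      simpa using hx

theorem attRange_subset_subSet {k : ℕ} (h : k + 1 ≤ m) {i : ET cw k}
    (hi : i ∈ sigmaSet cw m Cs k) :
    Set.range (AT cw k i) ⊆ subSet cw m Cs k := by
  intro y hy
  obtain ⟨k₁, h₁, i₁, hcell⟩ := exists_openCellAt cw k y
  -- push up to level m
  have hxm : incl cw m k (by omega) y ∈ openCellAt cw m k₁ (by omega) i₁ := by
    obtain ⟨d, hd, rfl⟩ := (mem_openCellAt_iff cw).mp hcell
    rw [mem_openCellAt_iff cw]
    exact ⟨d, hd, ContinuousMap.congr_fun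
      (incl_trans cw m k (k₁ + 1) (by omega) (by omega) (by omega)) _⟩
  have hatt : incl cw m k (by omega) y ∈ attRangeAt cw m k (by omega) i :=
    ⟨y, hy, rfl⟩
  have hbig : incl cw m k (by omega) y ∈ bigSet cw m Cs k₁ :=
    attRangeAt_subset_bigSet cw m Cs (by omega) h hi hatt
  have hi₁ : i₁ ∈ sigmaSet cw m Cs k₁ :=
    mem_sigmaSet_of_nonempty cw m Cs (by omega) ⟨_, hxm, hbig⟩
  exact Set.mem_iUnion.mpr ⟨k₁, Set.mem_iUnion.mpr ⟨h₁,
    Set.mem_biUnion hi₁ (openCellAt_subset_closedCellAt cw h₁ i₁ hcell)⟩⟩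

theorem Cs_subset_subSet : Cs ⊆ subSet cw m Cs m := by
  intro x hx
  obtain ⟨k, h, i, hcell⟩ := exists_openCellAt cw m x
  have hi : i ∈ sigmaSet cw m Cs k :=
    mem_sigmaSet_of_nonempty cw m Cs h ⟨x, hcell, Cs_subset_bigSet cw m Cs k hx⟩
  exact Set.mem_iUnion.mpr ⟨k, Set.mem_iUnion.mpr ⟨h,
    Set.mem_biUnion hi (openCellAt_subset_closedCellAt cw h i hcell)⟩⟩


theorem glueDesc_range {S D Y : Type} [TopologicalSpace S] [TopologicalSpace D]
    [TopologicalSpace Y] {E : Type} (g : C(S, D)) (hg : Function.Injective g)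
    (A : E → C(S, Y)) {W : Type v} [TopologicalSpace W] (u : C(Y, W)) (v : ∀ _ : E, C(D, W))
    (hc : ∀ i s, v i (g s) = u (A i s)) :
    Set.range (glueDesc g hg A u v hc) = Set.range u ∪ ⋃ i, Set.range (v i) := by
  ext w
  constructor
  · rintro ⟨z, rfl⟩
    rcases glue_cases g hg A z with ⟨y, rfl⟩ | ⟨i, d, rfl⟩
    · exact Or.inl ⟨y, rfl⟩
    · exact Or.inr (Set.mem_iUnion.mpr ⟨i, d, rfl⟩)
  · rintro (⟨y, rfl⟩ | hw)
    · exact ⟨qY g hg A y, rfl⟩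
    · obtain ⟨i, d, rfl⟩ := by simpa only [Set.mem_iUnion] using hw
      exact ⟨qD g hg A i d, rfl⟩

theorem t2_sk (hT2 : T2Space ↥(cw.sk m)) (K : ℕ) (h : K ≤ m) : T2Space ↥(cw.sk K) :=
  (incl_isClosedEmbedding cw m K h).toIsEmbedding.t2Space

/-- Lift a map through an injective map from a compact space. -/
noncomputable def liftThrough {X : Type u} {Y : Type v} {S : Type w} [TopologicalSpace X] [TopologicalSpace Y]
    [TopologicalSpace S] [CompactSpace X] [T2Space Y] (j : C(X, Y))
    (hj : Function.Injective j) (f : C(S, Y)) (hf : Set.range f ⊆ Set.range j) : C(S, X) :=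
  let e : X ≃ₜ Set.range j :=
    (j.continuous.isClosedEmbedding hj).toIsEmbedding.toHomeomorph
  ⟨fun s => e.symm ⟨f s, hf ⟨s, rfl⟩⟩,
    e.symm.continuous.comp (Continuous.subtype_mk f.continuous _)⟩

theorem j_liftThrough {X : Type u} {Y : Type v} {S : Type w} [TopologicalSpace X] [TopologicalSpace Y]
    [TopologicalSpace S] [CompactSpace X] [T2Space Y] (j : C(X, Y))
    (hj : Function.Injective j) (f : C(S, Y)) (hf : Set.range f ⊆ Set.range j) (s : S) :
    j (liftThrough j hj f hf s) = f s := by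
  set e : X ≃ₜ Set.range j :=
    (j.continuous.isClosedEmbedding hj).toIsEmbedding.toHomeomorph with he
  have h1 : ∀ x : X, (e x : Y) = j x := fun x => rfl
  have h2 : liftThrough j hj f hf s = e.symm ⟨f s, hf ⟨s, rfl⟩⟩ := rfl
  rw [h2, ← h1, Homeomorph.apply_symm_apply]

variable (hT2 : T2Space ↥(cw.sk m)) (hCs : IsCompact Cs)

/-- A `Fintype` structure on the chosen cells. -/
noncomputable def sigFT (k : ℕ) : Fintype ↥(sigmaSet cw m Cs k) :=
  (sigmaSet_finite cw m Cs hCs k).fintype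

/-- The number of chosen cells in dimension `k`. -/
noncomputable def sigCard (k : ℕ) : ℕ := @Fintype.card _ (sigFT cw m Cs hCs k)

/-- Small re-indexing of the chosen cells (to land in an arbitrary universe `w`). -/
noncomputable def sigEquiv (k : ℕ) :
    ULift.{0} (Fin (sigCard cw m Cs hCs k)) ≃ ↥(sigmaSet cw m Cs k) :=
  Equiv.ulift.trans (@Fintype.equivFin _ (sigFT cw m Cs hCs k)).symm

theorem sigCard_eq_zero {k : ℕ} (h : sigmaSet cw m Cs k = ∅) :
    sigCard cw m Cs hCs k = 0 := by
  haveI : IsEmpty ↥(sigmaSet cw m Cs k) := Set.isEmpty_coe_sort.mpr h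
  exact @Fintype.card_eq_zero _ (sigFT cw m Cs hCs k) _

/-- Cross-universe comparison of spheres. -/
noncomputable def sphH (z : ℤ) : ↥(sphere z) ≃ₜ ↥(sphere z) :=
  ((Homeomorph.ulift :
      ULift.{0} (Metric.sphere (0 : EuclideanSpace ℝ <| Fin <| (z + 1).toNat) 1) ≃ₜ _)).trans
    ((Homeomorph.ulift :
      ULift.{0} (Metric.sphere (0 : EuclideanSpace ℝ <| Fin <| (z + 1).toNat) 1) ≃ₜ _)).symm

/-- Cross-universe comparison of disks. -/
noncomputable def dskH (z : ℤ) : ↥(disk z) ≃ₜ ↥(disk z) :=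
  ((Homeomorph.ulift :
      ULift.{0} (Metric.closedBall (0 : EuclideanSpace ℝ <| Fin z.toNat) 1) ≃ₜ _)).trans
    ((Homeomorph.ulift :
      ULift.{0} (Metric.closedBall (0 : EuclideanSpace ℝ <| Fin z.toNat) 1) ≃ₜ _)).symm

theorem dskH_sphereInclusion (z : ℤ) (s : ↥(sphere z)) :
    dskH (z + 1) (sphereInclusion z s) = sphereInclusion z (sphH z s) :=
  rfl

/-- Data for the finite subcomplex at level `K`. -/
structure SubData (K : ℕ) where
  Kt : TopCat.{0}
  j : C(↥Kt, ↥(cw.sk K))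
  inj : Function.Injective j
  cpt : CompactSpace ↥Kt
  rng : Set.range j = subSet cw m Cs K

theorem sigma_nonempty_le {K : ℕ} (i : ↥(sigmaSet cw m Cs K)) : K + 1 ≤ m := by
  by_contra h
  exact Set.eq_empty_iff_forall_notMem.mp (sigmaSet_eq_empty_of_le cw m Cs h) i.1 i.2

/-- Lifted attaching maps for the subcomplex. -/
noncomputable def subAtt (K : ℕ) (D : SubData cw m Cs K)
    (i : ULift.{0} (Fin (sigCard cw m Cs hCs K))) : C(↥(sphere ((K : ℤ) - 1)), ↥D.Kt) :=
  haveI : CompactSpace ↥D.Kt := D.cpt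
  haveI : T2Space ↥(cw.sk K) := t2_sk cw m hT2 K
    (by have := sigma_nonempty_le cw m Cs (sigEquiv cw m Cs hCs K i); omega)
  liftThrough D.j D.inj
    ((AT cw K (sigEquiv cw m Cs hCs K i).1).comp
      ⟨sphH ((K : ℤ) - 1), (sphH _).continuous⟩)
    (by
      rw [D.rng]
      intro y hy
      obtain ⟨s, rfl⟩ := hy
      exact attRange_subset_subSet cw m Cs
        (sigma_nonempty_le cw m Cs (sigEquiv cw m Cs hCs K i))
        (sigEquiv cw m Cs hCs K i).2 ⟨_, rfl⟩)

theorem j_subAtt (K : ℕ) (D : SubData cw m Cs K)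
    (i : ULift.{0} (Fin (sigCard cw m Cs hCs K))) (s : ↥(sphere ((K : ℤ) - 1))) :
    D.j (subAtt cw m Cs hT2 hCs K D i s) =
      AT cw K (sigEquiv cw m Cs hCs K i).1 (sphH ((K : ℤ) - 1) s) := by
  haveI : CompactSpace ↥D.Kt := D.cpt
  haveI : T2Space ↥(cw.sk K) := t2_sk cw m hT2 K
    (by have := sigma_nonempty_le cw m Cs (sigEquiv cw m Cs hCs K i); omega)
  exact j_liftThrough _ _ _ _ s

/-- One step of the subcomplex construction. -/
noncomputable def subStep (K : ℕ) (D : SubData cw m Cs K) : SubData cw m Cs (K + 1) := by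
  haveI : CompactSpace ↥D.Kt := D.cpt
  refine
    { Kt := glueObj (sphere ((K : ℤ) - 1)) (disk ((K : ℤ) - 1 + 1)) D.Kt
        (sphereInclusion ((K : ℤ) - 1)) (sphereInclusion_injective _)
        (fun i : ULift.{0} (Fin (sigCard cw m Cs hCs K)) =>
          (ConcreteCategory.ofHom (subAtt cw m Cs hT2 hCs K D i) : sphere ((K : ℤ) - 1) ⟶ D.Kt))
      j := glueDesc _ (sphereInclusion_injective ((K : ℤ) - 1)) _
        ((incC cw K).comp D.j)
        (fun i => ⟨fun d => (psi cw K).symm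
            (qd cw K (sigEquiv cw m Cs hCs K i).1 (dskH ((K : ℤ) - 1 + 1) d)),
          (psi cw K).symm.continuous.comp
            ((qd cw K (sigEquiv cw m Cs hCs K i).1).continuous.comp (dskH _).continuous)⟩) ?_
      inj := ?_
      cpt := glue_compactSpace _ _ _
      rng := ?_ }
  · -- compatibility
    intro i s
    show (psi cw K).symm (qd cw K (sigEquiv cw m Cs hCs K i).1
        (dskH _ (sphereInclusion ((K : ℤ) - 1) s))) =
      incC cw K (D.j (subAtt cw m Cs hT2 hCs K D i s))
    rw [j_subAtt cw m Cs hT2 hCs K D i s, dskH_sphereInclusion]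
    have h1 : qd cw K (sigEquiv cw m Cs hCs K i).1 (gk K (sphH ((K : ℤ) - 1) s)) =
        qy cw K (AT cw K (sigEquiv cw m Cs hCs K i).1 (sphH ((K : ℤ) - 1) s)) :=
      (qd_eq_qy_iff cw).mpr ⟨sphH ((K : ℤ) - 1) s, rfl, rfl⟩
    rw [h1, psi_symm_qy]
  · -- injectivity
    intro z z' hzz
    rcases glue_cases _ (sphereInclusion_injective ((K : ℤ) - 1)) _ z with ⟨y, rfl⟩ | ⟨i, d, rfl⟩ <;>
      rcases glue_cases _ (sphereInclusion_injective ((K : ℤ) - 1)) _ z' with ⟨y', rfl⟩ | ⟨i', d', rfl⟩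
    · have : incC cw K (D.j y) = incC cw K (D.j y') := hzz
      have := D.inj ((incC_isClosedEmbedding cw K).injective this)
      rw [this]
    · have hq : incC cw K (D.j y) = (psi cw K).symm
          (qd cw K (sigEquiv cw m Cs hCs K i').1 (dskH _ d')) := hzz
      have h3 : qd cw K (sigEquiv cw m Cs hCs K i').1 (dskH _ d') = qy cw K (D.j y) := by
        have := congrArg (psi cw K) hq
        rwa [Homeomorph.apply_symm_apply, psi_incC, eq_comm] at this
      obtain ⟨s1, hs1, hs2⟩ := (qd_eq_qy_iff cw).mp h3
      set s : ↥(sphere ((K : ℤ) - 1)) := (sphH ((K : ℤ) - 1)).symm s1 with hs_def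
      have hgs : sphereInclusion ((K : ℤ) - 1) s = d' := by
        apply (dskH ((K : ℤ) - 1 + 1)).injective
        rw [dskH_sphereInclusion, hs_def, Homeomorph.apply_symm_apply, hs1]
      have hy : subAtt cw m Cs hT2 hCs K D i' s = y := by
        apply D.inj
        rw [j_subAtt cw m Cs hT2 hCs K D i' s, hs_def, Homeomorph.apply_symm_apply, hs2]
      exact (qY_eq_qD_iff _ _ _).mpr ⟨s, hgs, hy⟩
    · have hq : (psi cw K).symm
          (qd cw K (sigEquiv cw m Cs hCs K i).1 (dskH _ d)) = incC cw K (D.j y') := hzz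
      have h3 : qd cw K (sigEquiv cw m Cs hCs K i).1 (dskH _ d) = qy cw K (D.j y') := by
        have := congrArg (psi cw K) hq
        rwa [Homeomorph.apply_symm_apply, psi_incC] at this
      obtain ⟨s1, hs1, hs2⟩ := (qd_eq_qy_iff cw).mp h3
      set s : ↥(sphere ((K : ℤ) - 1)) := (sphH ((K : ℤ) - 1)).symm s1 with hs_def
      have hgs : sphereInclusion ((K : ℤ) - 1) s = d := by
        apply (dskH ((K : ℤ) - 1 + 1)).injective
        rw [dskH_sphereInclusion, hs_def, Homeomorph.apply_symm_apply, hs1]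
      have hy : subAtt cw m Cs hT2 hCs K D i s = y' := by
        apply D.inj
        rw [j_subAtt cw m Cs hT2 hCs K D i s, hs_def, Homeomorph.apply_symm_apply, hs2]
      exact (qD_eq_qY_iff _ _ _).mpr ⟨s, hgs, hy⟩
    · have hq : (psi cw K).symm (qd cw K (sigEquiv cw m Cs hCs K i).1 (dskH _ d)) =
          (psi cw K).symm (qd cw K (sigEquiv cw m Cs hCs K i').1 (dskH _ d')) := hzz
      have h3 := (psi cw K).symm.injective hq
      rcases (qd_eq_qd_iff cw).mp h3 with hsig | ⟨s1, s1', hs1, hs2, hs3⟩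
      · have hi : (sigEquiv cw m Cs hCs K i).1 = (sigEquiv cw m Cs hCs K i').1 :=
          congrArg Sigma.fst hsig
        have hii : i = i' := (sigEquiv cw m Cs hCs K).injective (Subtype.ext hi)
        have hd : dskH _ d = dskH _ d' := eq_of_heq (Sigma.mk.inj_iff.mp hsig).2
        have hdd : d = d' := (dskH ((K : ℤ) - 1 + 1)).injective hd
        rw [hii, hdd]
      · set s : ↥(sphere ((K : ℤ) - 1)) := (sphH ((K : ℤ) - 1)).symm s1 with hs_def
        set s' : ↥(sphere ((K : ℤ) - 1)) := (sphH ((K : ℤ) - 1)).symm s1' with hs'_def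
        have hgs : sphereInclusion ((K : ℤ) - 1) s = d := by
          apply (dskH ((K : ℤ) - 1 + 1)).injective
          rw [dskH_sphereInclusion, hs_def, Homeomorph.apply_symm_apply, hs1]
        have hgs' : sphereInclusion ((K : ℤ) - 1) s' = d' := by
          apply (dskH ((K : ℤ) - 1 + 1)).injective
          rw [dskH_sphereInclusion, hs'_def, Homeomorph.apply_symm_apply, hs2]
        refine (qD_eq_qD_iff _ _ _).mpr (Or.inr ⟨s, s', hgs, hgs', ?_⟩)
        apply D.inj
        show D.j (subAtt cw m Cs hT2 hCs K D i s) = D.j (subAtt cw m Cs hT2 hCs K D i' s')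
        rw [j_subAtt cw m Cs hT2 hCs K D i s, j_subAtt cw m Cs hT2 hCs K D i' s',
          hs_def, hs'_def, Homeomorph.apply_symm_apply, Homeomorph.apply_symm_apply, hs3]
  · -- range
    ext x
    constructor
    · rintro ⟨z, rfl⟩
      rw [subSet_succ]
      rcases glue_cases _ (sphereInclusion_injective ((K : ℤ) - 1)) _ z with ⟨y, rfl⟩ | ⟨i, d, rfl⟩
      · exact Or.inl ⟨D.j y, by rw [← D.rng]; exact ⟨y, rfl⟩, rfl⟩
      · refine Or.inr (Set.mem_biUnion (sigEquiv cw m Cs hCs K i).2 ?_)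
        exact ⟨qd cw K (sigEquiv cw m Cs hCs K i).1 (dskH _ d), ⟨dskH _ d, rfl⟩, rfl⟩
    · intro hx
      rw [subSet_succ] at hx
      rcases hx with ⟨y0, hy0, rfl⟩ | hx
      · rw [← D.rng] at hy0
        obtain ⟨y, rfl⟩ := hy0
        exact ⟨qY _ (sphereInclusion_injective ((K : ℤ) - 1)) _ y, rfl⟩
      · obtain ⟨i', hi', z, ⟨d1, rfl⟩, rfl⟩ := by
          simpa only [Set.mem_iUnion] using hx
        refine ⟨qD _ (sphereInclusion_injective ((K : ℤ) - 1)) _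
          ((sigEquiv cw m Cs hCs K).symm ⟨i', hi'⟩) ((dskH _).symm d1), ?_⟩
        show (psi cw K).symm _ = _
        rw [Homeomorph.apply_symm_apply]
        congr 2 <;> rw [Equiv.apply_symm_apply]

/-- The subcomplex data, for every level. -/
noncomputable def subData : (K : ℕ) → SubData cw m Cs K
  | 0 =>
    { Kt := TopCat.of PEmpty.{1}
      j := ⟨fun x => x.elim, by
        haveI : IsEmpty ↥(TopCat.of PEmpty.{1}) := ⟨fun x => x.elim⟩
        refine ⟨fun s _ => ?_⟩
        convert isOpen_empty using 1
        exact Set.eq_empty_of_isEmpty _⟩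
      inj := fun x => x.elim
      cpt := inferInstanceAs (CompactSpace PEmpty.{1})
      rng := by
        haveI : IsEmpty ↥(TopCat.of PEmpty.{1}) := ⟨fun x => x.elim⟩
        rw [subSet_zero]
        exact Set.range_eq_empty _ }
  | K + 1 => subStep cw m Cs hT2 hCs K (subData K)

/-- The finite subcomplex, as a CW complex. -/
noncomputable def cwSub : CWComplex where
  sk K := (subData cw m Cs hT2 hCs K).Kt
  attachCells K :=
    { cells := ULift.{0} (Fin (sigCard cw m Cs hCs K))
      attachMaps := fun i =>
        (ConcreteCategory.ofHom (subAtt cw m Cs hT2 hCs K (subData cw m Cs hT2 hCs K) i) :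
          sphere ((K : ℤ) - 1) ⟶ (subData cw m Cs hT2 hCs K).Kt)
      iso_pushout := by
        haveI : CompactSpace ↥(subData cw m Cs hT2 hCs K).Kt :=
          (subData cw m Cs hT2 hCs K).cpt
        refine ?_ ≪≫ pushoutSymmetry _ _
        exact (glueIsoPushout (sphere ((K : ℤ) - 1)) (disk ((K : ℤ) - 1 + 1))
          (subData cw m Cs hT2 hCs K).Kt (sphereInclusion ((K : ℤ) - 1))
          (sphereInclusion_injective _)
          (fun i => (ConcreteCategory.ofHom (subAtt cw m Cs hT2 hCs K (subData cw m Cs hT2 hCs K) i) :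
            sphere ((K : ℤ) - 1) ⟶ (subData cw m Cs hT2 hCs K).Kt))).symm }
  isEmpty_sk_zero := ⟨fun x => PEmpty.elim x⟩

end Choose

end Skeleta

end CtrlDom

open CtrlDom CategoryTheory Topology

/-- Let `X̂` be a compact metric space, `Z ⊆ X̂` closed and
`M = X̂ \ Z`.  Assume `M` carries a CW-structure all of whose cells have dimension at
most `n`, and that for every `δ > 0` there is a homotopy `H : X̂ × [0,1] → X̂` with
`H(x,0) = x`, `H(x,t) ∉ Z` for `t > 0`, and `dist (H(x,t)) x < δ`.  Then `M` (with the
restricted metric) is controlled `n`-dominated: for every `ε > 0` there are a finite CW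
complex `K` with cells of dimension at most `n`, maps `p : K → M` and `g : M → K`, and a
homotopy `h` from `p ∘ g` to `id_M` all of whose tracks have length less than `ε`. -/
theorem controlled_n_dominated_of_Z_pushoff
    (Xhat : Type) [MetricSpace Xhat] [CompactSpace Xhat]
    (Z : Set Xhat) (hZ : IsClosed Z) (n : ℕ)
    (hCW : ∃ cw : CWComplex,
      (∀ k, n < k → IsEmpty (cw.attachCells k).cells) ∧
      Nonempty (↥cw.toRelativeCWComplex.toTopCat ≃ₜ ↥(Zᶜ : Set Xhat)))
    (hpush : ∀ δ : ℝ, 0 < δ → ∃ H : C(Xhat × I, Xhat),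
      (∀ x : Xhat, H (x, 0) = x) ∧
      (∀ (x : Xhat) (t : I), 0 < (t : ℝ) → H (x, t) ∉ Z) ∧
      (∀ (x : Xhat) (t : I), dist (H (x, t)) x < δ)) :
    ∀ ε : ℝ, 0 < ε →
      ∃ cwK : CWComplex,
        (∀ k, Finite (cwK.attachCells k).cells) ∧
        (∀ k, n < k → IsEmpty (cwK.attachCells k).cells) ∧
        ∃ (p : C(↥cwK.toRelativeCWComplex.toTopCat, ↥(Zᶜ : Set Xhat)))
          (g : C(↥(Zᶜ : Set Xhat), ↥cwK.toRelativeCWComplex.toTopCat))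
          (h : C(↥(Zᶜ : Set Xhat) × I, ↥(Zᶜ : Set Xhat))),
          (∀ x, h (x, 0) = p (g x)) ∧
          (∀ x, h (x, 1) = x) ∧
          (∀ (x : ↥(Zᶜ : Set Xhat)) (t : I), dist (h (x, t)) x < ε) := by
  classical
  obtain ⟨cw, hdim, ⟨phi⟩⟩ := hCW
  intro ε hε
  set m : ℕ := n + 1 with hm_def
  -- the CW complex is its (n+1)-st skeleton
  have hm : ∀ k, m ≤ k → IsEmpty ((cw.toRelativeCWComplex.attachCells k).cells) := by
    intro k hk
    exact hdim k (by omega)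
  have v : ↥(cw.sk m) ≃ₜ ↥cw.toRelativeCWComplex.toTopCat :=
    (TopCat.homeoOfIso (skeletonIso cw.toRelativeCWComplex m hm)).symm
  have phiv : ↥(cw.sk m) ≃ₜ ↥(Zᶜ : Set Xhat) := v.trans phi
  haveI hT2 : T2Space ↥(cw.sk m) := phiv.isEmbedding.t2Space
  -- the push-off homotopy at scale ε
  obtain ⟨H, hH0, hHM, hHd⟩ := hpush ε hε
  have hone : ∀ x : Xhat, H (x, 1) ∈ (Zᶜ : Set Xhat) := fun x =>
    hHM x 1 (by norm_num)
  -- the compact image inside the skeleton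
  let Jhat : C(Xhat, ↥(Zᶜ : Set Xhat)) :=
    ⟨fun x => ⟨H (x, 1), hone x⟩,
      Continuous.subtype_mk (H.continuous.comp (continuous_id.prodMk continuous_const)) _⟩
  let Cs : Set ↥(cw.sk m) := Set.range (fun x => phiv.symm (Jhat x))
  have hCs : IsCompact Cs :=
    isCompact_range (phiv.symm.continuous.comp Jhat.continuous)
  -- the finite subcomplex
  refine ⟨cwSub cw m Cs hT2 hCs, ?_, ?_, ?_⟩
  · intro k
    exact show Finite (ULift (Fin (sigCard cw m Cs hCs k))) from inferInstance
  · intro k hk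
    have hemp : sigmaSet cw m Cs k = ∅ := sigmaSet_eq_empty_of_le cw m Cs (by omega)
    exact show IsEmpty (ULift (Fin (sigCard cw m Cs hCs k))) by
      rw [sigCard_eq_zero cw m Cs hCs hemp]
      infer_instance
  · -- the maps
    have hKm : ∀ k, m ≤ k →
        IsEmpty (((cwSub cw m Cs hT2 hCs).toRelativeCWComplex.attachCells k).cells) := by
      intro k hk
      have hemp : sigmaSet cw m Cs k = ∅ := sigmaSet_eq_empty_of_le cw m Cs (by omega)
      exact show IsEmpty (ULift (Fin (sigCard cw m Cs hCs k))) by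
        rw [sigCard_eq_zero cw m Cs hCs hemp]
        infer_instance
    have u : ↥(cwSub cw m Cs hT2 hCs).toRelativeCWComplex.toTopCat ≃ₜ
        ↥(subData cw m Cs hT2 hCs m).Kt :=
      TopCat.homeoOfIso (skeletonIso (cwSub cw m Cs hT2 hCs).toRelativeCWComplex m hKm)
    set Dm := subData cw m Cs hT2 hCs m with hDm
    haveI : CompactSpace ↥Dm.Kt := Dm.cpt
    have hjm : IsClosedEmbedding Dm.j := Dm.j.continuous.isClosedEmbedding Dm.inj
    let e : ↥Dm.Kt ≃ₜ Set.range Dm.j := hjm.toIsEmbedding.toHomeomorph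
    have hmem : ∀ x : Xhat, phiv.symm (Jhat x) ∈ Set.range Dm.j := by
      intro x
      rw [Dm.rng]
      exact Cs_subset_subSet cw m Cs ⟨x, rfl⟩
    -- p
    refine ⟨⟨fun x => phiv (Dm.j (u x)),
      phiv.continuous.comp (Dm.j.continuous.comp u.continuous)⟩, ?_⟩
    -- g
    refine ⟨⟨fun x => u.symm (e.symm ⟨phiv.symm (Jhat x.1), hmem x.1⟩),
      u.symm.continuous.comp (e.symm.continuous.comp (Continuous.subtype_mk
        (phiv.symm.continuous.comp (Jhat.continuous.comp continuous_subtype_val)) _))⟩, ?_⟩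
    -- h
    have hhmem : ∀ (x : ↥(Zᶜ : Set Xhat)) (t : I), H (x.1, σ t) ∈ (Zᶜ : Set Xhat) := by
      intro x t
      rcases lt_or_eq_of_le (unitInterval.nonneg (σ t)) with hpos | hzero
      · exact hHM x.1 (σ t) hpos
      · have : σ t = 0 := by
          apply Subtype.ext
          exact hzero.symm
        rw [this, hH0 x.1]
        exact x.2
    refine ⟨⟨fun q => ⟨H (q.1.1, σ q.2), hhmem q.1 q.2⟩, ?_⟩, ?_, ?_, ?_⟩
    · -- continuity of h
      apply Continuous.subtype_mk
      apply H.continuous.comp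
      exact ((continuous_subtype_val.comp continuous_fst).prodMk
        (unitInterval.continuous_symm.comp continuous_snd))
    · -- h (x, 0) = p (g x)
      intro x
      apply Subtype.ext
      show H (x.1, σ 0) = (phiv (Dm.j (u (u.symm (e.symm ⟨phiv.symm (Jhat x.1), hmem x.1⟩)))) : Xhat)
      rw [Homeomorph.apply_symm_apply]
      have hje : Dm.j (e.symm ⟨phiv.symm (Jhat x.1), hmem x.1⟩) = phiv.symm (Jhat x.1) := by
        have h1 : ∀ z : ↥Dm.Kt, (e z : ↥(cw.sk m)) = Dm.j z := fun z => rfl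
        rw [← h1, Homeomorph.apply_symm_apply]
      rw [hje, Homeomorph.apply_symm_apply]
      show H (x.1, σ 0) = H (x.1, 1)
      rw [unitInterval.symm_zero]
    · -- h (x, 1) = x
      intro x
      apply Subtype.ext
      show H (x.1, σ 1) = x.1
      rw [unitInterval.symm_one]
      exact hH0 x.1
    · -- distance control
      intro x t
      rw [Subtype.dist_eq]
      exact hHd x.1 (σ t)
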